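/- A vertex mapping f : V(G⃗) → V(H⃗) is a pushable homomorphism of the oriented graph G⃗ to H⃗ if and only if f preserves the directability of every ordered closed walk of G⃗: for each ordered closed walk C of G⃗, the image f(C) is an ordered closed walk of H⃗ whose orientation has the same parity of forward arcs (and same length parity consequence) as C. -/

import Mathlib

namespace Stmt11Aux

variable {U W : Type*}

/-- parity embedding of `Bool` into `ZMod 2`. -/
def sig (b : Bool) : ZMod 2 := if b then 1 else 0

lemma sig_xor (a b : Bool) : sig (xor a b) = sig a + sig b := by
  cases a <;> cases b <;> simp [sig] <;> decide

lemma sig_eq_zero {b : Bool} (h : sig b = 0) : b = false := by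
  cases b
  · rfl
  · simp [sig] at h

lemma card_filter_sig {n : ℕ} (p : Fin n → Bool) :
    ((Finset.univ.filter fun i => p i = true).card : ZMod 2) = ∑ i, sig (p i) := by
  rw [← Finset.sum_boole]
  rfl

end Stmt11Aux

namespace Stmt11Aux

variable {U W : Type*}

def Rel (D : U → U → Bool) (u v : U) : Prop := D u v = true ∨ D v u = true

lemma rel_symm {D : U → U → Bool} {u v : U} (h : Rel D u v) : Rel D v u := Or.symm h

/-- "push bit" across an edge: true iff the arc direction flips under `f`. -/
def c (D : U → U → Bool) (E : W → W → Bool) (f : U → W) (u v : U) : Bool :=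
  if D u v then !(E (f u) (f v)) else !(E (f v) (f u))

lemma c_symm {D : U → U → Bool} {E : W → W → Bool} {f : U → W}
    (hD : ∀ u v, D u v = true → D v u = false) {u v : U} (h : Rel D u v) :
    c D E f u v = c D E f v u := by
  rcases h with h | h
  · have h2 := hD u v h
    simp [c, h, h2]
  · have h2 := hD v u h
    simp [c, h, h2]

inductive Reach (D : U → U → Bool) (E : W → W → Bool) (f : U → W) : U → U → Bool → Prop
  | refl (u : U) : Reach D E f u u false
  | tail {u v w : U} {p : Bool} : Reach D E f u v p → Rel D v w →
      Reach D E f u w (xor p (c D E f v w))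

variable {D : U → U → Bool} {E : W → W → Bool} {f : U → W}

lemma Reach.single {u v : U} (h : Rel D u v) : Reach D E f u v (c D E f u v) := by
  simpa using Reach.tail (Reach.refl u) h

lemma Reach.head (hD : ∀ u v, D u v = true → D v u = false) {u v w : U} {p : Bool}
    (h : Rel D u v) (hr : Reach D E f v w p) : Reach D E f u w (xor (c D E f u v) p) := by
  induction hr with
  | refl => simpa using Reach.single h
  | tail h1 h2 ih =>
      have := Reach.tail ih h2
      simpa [Bool.xor_assoc] using this

lemma Reach.symm (hD : ∀ u v, D u v = true → D v u = false) {u v : U} {p : Bool}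
    (h : Reach D E f u v p) : Reach D E f v u p := by
  induction h with
  | refl => exact .refl _
  | tail h1 h2 ih =>
      have := Reach.head hD (rel_symm h2) ih
      rwa [c_symm hD (rel_symm h2), Bool.xor_comm] at this

lemma Reach.trans {u v w : U} {p q : Bool} (h1 : Reach D E f u v p)
    (h2 : Reach D E f v w q) : Reach D E f u w (xor p q) := by
  induction h2 with
  | refl => simpa using h1
  | tail h3 h4 ih =>
      have := Reach.tail ih h4
      simpa [Bool.xor_assoc] using this

end Stmt11Aux

namespace Stmt11Aux

variable {U W : Type*} {D : U → U → Bool} {E : W → W → Bool} {f : U → W}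

def parAux (D : U → U → Bool) (E : W → W → Bool) (f : U → W) : U → List U → Bool
  | _, [] => false
  | a, b :: t => xor (c D E f a b) (parAux D E f b t)

lemma parAux_concat : ∀ (l : List U) (a v w : U),
    parAux D E f a (l ++ [v] ++ [w]) = xor (parAux D E f a (l ++ [v])) (c D E f v w)
  | [], a, v, w => by simp [parAux, Bool.xor_assoc]
  | b :: t, a, v, w => by
      show (xor (c D E f a b) (parAux D E f b (t ++ [v] ++ [w]))) =
        xor (xor (c D E f a b) (parAux D E f b (t ++ [v]))) (c D E f v w)
      rw [parAux_concat t b v w, Bool.xor_assoc]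

lemma chain'_concat {l : List U} {u v w : U} (h : List.Chain' (Rel D) (u :: (l ++ [v])))
    (hvw : Rel D v w) : List.Chain' (Rel D) (u :: (l ++ [v] ++ [w])) := by
  have : (u :: (l ++ [v] ++ [w])) = (u :: (l ++ [v])) ++ [w] := by simp
  rw [this]
  unfold List.Chain' at h ⊢
  rw [List.isChain_append]
  refine ⟨h, List.isChain_singleton _, ?_⟩
  intro x hx y hy
  simp at hy
  subst hy
  have : x = v := by
    have hl : (u :: (l ++ [v])).getLast? = some v := by
      rw [show (u :: (l ++ [v])) = (u :: l) ++ [v] by simp]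
      exact List.getLast?_concat
    rw [hl] at hx
    exact (Option.some_inj.mp hx).symm
  rw [this]; exact hvw

/-- a `Reach` gives a concrete walk (list of further vertices). -/
lemma reach_walk {u v : U} {p : Bool} (h : Reach D E f u v p) :
    (u = v ∧ p = false) ∨
      ∃ l : List U, List.Chain' (Rel D) (u :: (l ++ [v])) ∧ parAux D E f u (l ++ [v]) = p := by
  induction h with
  | refl => exact Or.inl ⟨rfl, rfl⟩
  | @tail b d q h1 h2 ih =>
      right
      rcases ih with ⟨rfl, rfl⟩ | ⟨l, hc, hp⟩
      · refine ⟨[], ?_, ?_⟩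
        · simpa [List.Chain'] using h2
        · simp [parAux]
      · refine ⟨l ++ [b], chain'_concat hc h2, ?_⟩
        rw [parAux_concat, hp]

end Stmt11Aux

namespace Stmt11Aux

variable {U W : Type*} {D : U → U → Bool} {E : W → W → Bool} {f : U → W}

lemma get_eq_of_val {α : Type*} (L : List α) {i j : Fin L.length} (h : i.val = j.val) :
    L.get i = L.get j := by
  congr 1
  exact Fin.ext h

lemma fin_add_one_val {m : ℕ} [NeZero m] (i : Fin m) :
    ((i + 1 : Fin m)).val = if i.val + 1 = m then 0 else i.val + 1 := by
  have him : i.val < m := i.isLt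
  rw [Fin.add_def, Fin.val_one']
  rcases Nat.lt_or_ge 1 m with hm2 | hm2
  · rw [Nat.mod_eq_of_lt hm2]
    by_cases hcase : i.val + 1 = m
    · simp only [Fin.val_mk]
      rw [if_pos hcase, hcase, Nat.mod_self]
    · simp only [Fin.val_mk]
      rw [if_neg hcase, Nat.mod_eq_of_lt (by omega)]
  · have hm1 : m = 1 := by have := NeZero.pos m; omega
    subst hm1
    have h0 : i.val = 0 := by omega
    simp [h0]

lemma get_concat {α : Type*} : ∀ (l : List α) (a : α) (h : l.length < (l ++ [a]).length),
    (l ++ [a]).get ⟨l.length, h⟩ = a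
  | [], _, _ => rfl
  | b :: t, a, h => get_concat t a (by simpa using h)

lemma parAux_sum : ∀ (l : List U) (a : U),
    sig (parAux D E f a l) = ∑ i : Fin l.length,
        sig (c D E f ((a :: l).get ⟨i.val, by simp only [List.length_cons]; omega⟩)
          ((a :: l).get ⟨i.val + 1, by simp only [List.length_cons]; omega⟩))
  | [], a => by simp [parAux, sig]
  | b :: t, a => by
      show sig (xor (c D E f a b) (parAux D E f b t)) = _
      rw [sig_xor, parAux_sum t b]
      simp only [List.length_cons]
      rw [Fin.sum_univ_succ]
      rfl

lemma c_eq (hE : ∀ u v, E u v = true → E v u = false) {u v : U} (huv : Rel D u v)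
    (hex : E (f u) (f v) = true ∨ E (f v) (f u) = true) :
    c D E f u v = xor (D u v) (E (f u) (f v)) := by
  rcases hd : D u v with _ | _
  · have hd' : D v u = true := huv.resolve_left (by simp [hd])
    rcases he : E (f v) (f u) with _ | _
    · have h2 : E (f u) (f v) = true := hex.resolve_right (by simp [he])
      simp [c, hd, he, h2]
    · have h2 : E (f u) (f v) = false := hE _ _ he
      simp [c, hd, he, h2]
  · rcases he : E (f u) (f v) with _ | _ <;> simp [c, hd, he]

lemma reach_closed
    (hE : ∀ u v, E u v = true → E v u = false)
    (hRHS : ∀ (n : ℕ) [NeZero n] (w : Fin n → U),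
        (∀ i : Fin n, D (w i) (w (i + 1)) = true ∨ D (w (i + 1)) (w i) = true) →
        ((∀ i : Fin n,
            E (f (w i)) (f (w (i + 1))) = true ∨ E (f (w (i + 1))) (f (w i)) = true) ∧
          (Finset.univ.filter fun i : Fin n => D (w i) (w (i + 1)) = true).card
            ≡ (Finset.univ.filter fun i : Fin n =>
                E (f (w i)) (f (w (i + 1))) = true).card [MOD 2]))
    {u : U} {p : Bool} (h : Reach D E f u u p) : p = false := by
  rcases reach_walk h with ⟨-, h2⟩ | ⟨l, hc, hp⟩
  · exact h2
  set L : List U := u :: (l ++ [u]) with hL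
  set m : ℕ := (l ++ [u]).length with hm
  have hm' : m = l.length + 1 := by simp [hm]
  haveI : NeZero m := ⟨by omega⟩
  have hLlen : L.length = m + 1 := by simp [hL, hm]
  set w : Fin m → U := fun i => L.get ⟨i.val, by omega⟩ with hw
  have hgetlast : ∀ (hh : m < L.length), L.get ⟨m, hh⟩ = u := by
    intro hh
    rw [get_eq_of_val L (i := ⟨m, hh⟩)
      (j := ⟨(u :: l).length, by simp only [hLlen, List.length_cons]; omega⟩)
      (by simp only [List.length_cons]; omega)]
    exact get_concat (u :: l) u _
  have claimA : ∀ i : Fin m,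
      w (i + 1) = L.get ⟨i.val + 1, by have := i.isLt; omega⟩ := by
    intro i
    have him := i.isLt
    have hx : i.val + 1 < L.length := by omega
    by_cases hcase : i.val + 1 = m
    · have h0 : (i + 1 : Fin m).val = 0 := by rw [fin_add_one_val i, if_pos hcase]
      have hA : L.get ⟨i.val + 1, hx⟩ = u := by
        rw [get_eq_of_val L (i := ⟨i.val + 1, hx⟩) (j := ⟨m, by omega⟩) (by simpa using hcase)]
        exact hgetlast _
      have hB : w (i + 1) = u := by
        simp only [hw]
        exact get_eq_of_val L (i := ⟨(i + 1 : Fin m).val, by omega⟩) (j := ⟨0, by omega⟩)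
          (by simpa using h0)
      rw [hB, hA]
    · have h0 : (i + 1 : Fin m).val = i.val + 1 := by rw [fin_add_one_val i, if_neg hcase]
      simp only [hw]
      exact get_eq_of_val L (by simpa using h0)
  have hedge : ∀ i : Fin m, D (w i) (w (i + 1)) = true ∨ D (w (i + 1)) (w i) = true := by
    intro i
    have him := i.isLt
    have hcg := List.isChain_iff_getElem.mp hc i.val (by simp only [hLlen]; omega)
    rw [claimA i]
    exact hcg
  obtain ⟨part1, part2⟩ := hRHS m w hedge
  have hsig : sig p = 0 := by
    have e1 : sig p = ∑ i : Fin m, sig (c D E f (w i) (w (i + 1))) := by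
      rw [← hp, parAux_sum]
      refine Finset.sum_congr rfl fun i _ => ?_
      rw [claimA i]
    have e2 : ∀ i : Fin m, sig (c D E f (w i) (w (i + 1)))
        = sig (D (w i) (w (i + 1))) + sig (E (f (w i)) (f (w (i + 1)))) := fun i => by
      rw [c_eq hE (hedge i) (part1 i), sig_xor]
    rw [e1, Finset.sum_congr rfl (fun i _ => e2 i), Finset.sum_add_distrib,
      ← card_filter_sig, ← card_filter_sig,
      (ZMod.natCast_eq_natCast_iff _ _ _).mpr part2]
    exact CharTwo.add_self_eq_zero _
  exact sig_eq_zero hsig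

end Stmt11Aux


open Stmt11Aux


/-- Canonical characterization of pushable homomorphisms. Oriented graphs are encoded by
their arc relations `D : U → U → Bool` and `E : W → W → Bool` (no reverse arcs). A vertex
map `f` is a pushable homomorphism (i.e. a homomorphism of some push-equivalent
orientation, where pushing the set `{u | s u = true}` replaces the arc between `u` and `v`
by its reverse iff exactly one endpoint is in the set) iff `f` preserves the directability
of every ordered closed walk: the image of each ordered closed walk is an ordered closed
walk whose number of forward arcs has the same parity. -/
theorem stmt11 {U W : Type*} (D : U → U → Bool) (E : W → W → Bool)
    (hD : ∀ u v, D u v = true → D v u = false)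
    (hE : ∀ u v, E u v = true → E v u = false)
    (f : U → W) :
    (∃ s : U → Bool, ∀ u v,
        (cond (Bool.xor (s u) (s v)) (D v u) (D u v)) = true → E (f u) (f v) = true)
    ↔ (∀ (n : ℕ) [NeZero n] (w : Fin n → U),
        (∀ i : Fin n, D (w i) (w (i + 1)) = true ∨ D (w (i + 1)) (w i) = true) →
        ((∀ i : Fin n,
            E (f (w i)) (f (w (i + 1))) = true ∨ E (f (w (i + 1))) (f (w i)) = true) ∧
          (Finset.univ.filter fun i : Fin n => D (w i) (w (i + 1)) = true).card
            ≡ (Finset.univ.filter fun i : Fin n =>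
                E (f (w i)) (f (w (i + 1))) = true).card [MOD 2])) := by
  classical
  constructor
  · rintro ⟨s, hs⟩ n _ w hw
    have key : ∀ u v, (D u v = true ∨ D v u = true) →
        E (f u) (f v) = xor (D u v) (xor (s u) (s v)) ∧
        (E (f u) (f v) = true ∨ E (f v) (f u) = true) := by
      intro u v huv
      have hsvu : Bool.xor (s v) (s u) = Bool.xor (s u) (s v) := Bool.xor_comm _ _
      rcases ht : Bool.xor (s u) (s v) with _ | _
      · rcases hd : D u v with _ | _
        · have hd' : D v u = true := huv.resolve_left (by simp [hd])
          have h1 : E (f v) (f u) = true := hs v u (by rw [hsvu, ht]; simpa using hd')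
          have h2 : E (f u) (f v) = false := hE _ _ h1
          exact ⟨by simp [h2, hd], Or.inr h1⟩
        · have h1 : E (f u) (f v) = true := hs u v (by rw [ht]; simpa using hd)
          exact ⟨by simp [h1, hd], Or.inl h1⟩
      · rcases hd : D u v with _ | _
        · have hd' : D v u = true := huv.resolve_left (by simp [hd])
          have h1 : E (f u) (f v) = true := hs u v (by rw [ht]; simpa using hd')
          exact ⟨by simp [h1, hd], Or.inl h1⟩
        · have h1 : E (f v) (f u) = true := hs v u (by rw [hsvu, ht]; simpa using hd)
          have h2 : E (f u) (f v) = false := hE _ _ h1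
          exact ⟨by simp [h2, hd], Or.inr h1⟩
    refine ⟨fun i => (key _ _ (hw i)).2, ?_⟩
    rw [← ZMod.natCast_eq_natCast_iff _ _ 2]
    rw [card_filter_sig, card_filter_sig]
    have e2 : ∀ i : Fin n, sig (E (f (w i)) (f (w (i + 1))))
        = sig (D (w i) (w (i + 1))) + (sig (s (w i)) + sig (s (w (i + 1)))) := by
      intro i
      rw [(key _ _ (hw i)).1, sig_xor, sig_xor]
    rw [Finset.sum_congr rfl (fun i _ => e2 i), Finset.sum_add_distrib,
      Finset.sum_add_distrib]
    have hshift : ∑ i : Fin n, sig (s (w (i + 1))) = ∑ i : Fin n, sig (s (w i)) :=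
      Fintype.sum_equiv (Equiv.addRight (1 : Fin n)) _ _ (fun i => rfl)
    rw [hshift, CharTwo.add_self_eq_zero, add_zero]
  · intro hRHS
    have hclosed : ∀ (x : U) (p : Bool), Reach D E f x x p → p = false :=
      fun x p h => reach_closed hE hRHS h
    have huniq : ∀ {a b : U} {p q : Bool},
        Reach D E f a b p → Reach D E f a b q → p = q := by
      intro a b p q h1 h2
      have h3 := Reach.trans h1 (Reach.symm hD h2)
      have h4 := hclosed _ _ h3
      cases p <;> cases q <;> simp_all
    let st : Setoid U := ⟨fun a b => ∃ p, Reach D E f a b p,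
      ⟨fun a => ⟨false, Reach.refl a⟩,
       fun ⟨p, h⟩ => ⟨p, Reach.symm hD h⟩,
       fun ⟨p, h⟩ ⟨q, h'⟩ => ⟨_, Reach.trans h h'⟩⟩⟩
    have hroot : ∀ x : U, ∃ p, Reach D E f (Quotient.mk st x).out x p := fun x =>
      Quotient.exact (Quotient.out_eq (Quotient.mk st x))
    set s : U → Bool := fun x => (hroot x).choose with hsdef
    have hs : ∀ x, Reach D E f (Quotient.mk st x).out x (s x) := fun x =>
      (hroot x).choose_spec
    have hkey : ∀ a b, Rel D a b → Bool.xor (s a) (s b) = c D E f a b := by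
      intro a b hab
      have hq : Quotient.mk st a = Quotient.mk st b :=
        Quotient.sound (s := st) ⟨_, Reach.single hab⟩
      have h1 : Reach D E f (Quotient.mk st a).out b (xor (s a) (c D E f a b)) :=
        Reach.tail (hs a) hab
      have h2 : Reach D E f (Quotient.mk st a).out b (s b) := by rw [hq]; exact hs b
      have h3 : s b = xor (s a) (c D E f a b) := huniq h2 h1
      rw [h3]
      cases s a <;> cases c D E f a b <;> simp
    refine ⟨s, ?_⟩
    intro u v hcond
    rcases hx : Bool.xor (s u) (s v) with _ | _
    · rw [hx] at hcond
      simp only [Bool.cond_false] at hcond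
      have hc0 : c D E f u v = false := by rw [← hkey u v (Or.inl hcond), hx]
      simp [c, hcond] at hc0
      exact hc0
    · rw [hx] at hcond
      simp only [Bool.cond_true] at hcond
      have hd' : D u v = false := hD v u hcond
      have hc1 : c D E f u v = true := by rw [← hkey u v (Or.inr hcond), hx]
      have hex : E (f u) (f v) = true ∨ E (f v) (f u) = true := by
        have h2 := (hRHS 2 ![u, v] ?_).1 0
        · simpa using h2
        · intro i
          fin_cases i <;> simp [hcond]
      simp [c, hd'] at hc1
      exact hex.resolve_right (by simp [hc1])
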